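/- For every n ≥ 1, the Bernoulli-type polynomials of the first kind B_n^q(x) satisfy (B_n^q)'(x) = n·B_{n-1}^q(x) and Σ_{k=l}^{m} a_k B_n^q(x+k) = n·x^{n-1}, and B_0^q(x) = 1. -/

import Mathlib

open Polynomial Finset

/-- Let `Δ_q(t) = ∑_{k=l}^{m} a_k e^{kt}` with `∑ a_k = 0`,
`∑ k·a_k = 1`, and let the Bernoulli-type polynomials of the first kind be
defined by `(t/Δ_q(t))·e^{xt} = ∑_{n≥0} B_n^q(x) tⁿ/n!`.  Then `B_0^q = 1` and,
for every `n ≥ 1`, `(B_n^q)' = n·B_{n-1}^q` and `Δ_q B_n^q(x) = n·x^{n-1}`. -/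
theorem bernoulli_type_first_kind_characterization
    (l m : ℤ) (hlm : l < m) (a : ℤ → ℚ)
    (ha0 : ∑ k ∈ Finset.Icc l m, a k = 0)
    (ha1 : ∑ k ∈ Finset.Icc l m, (k : ℚ) * a k = 1)
    -- `J = t/Δ_q(t)`, where the indicator `Δ_q(t)` has coefficients
    -- `(∑_k a_k kⁿ)/n!`:
    (J : PowerSeries ℚ)
    (hJ : J * (PowerSeries.mk fun n =>
        (∑ k ∈ Finset.Icc l m, a k * (k : ℚ) ^ n) / (n.factorial : ℚ)) = PowerSeries.X)
    -- the Bernoulli-type polynomials of the first kind: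
    (B : ℕ → Polynomial ℚ)
    (hB : (PowerSeries.map (Polynomial.C : ℚ →+* Polynomial ℚ) J) *
        (PowerSeries.mk fun n => ((n.factorial : ℚ)⁻¹) • (Polynomial.X : Polynomial ℚ) ^ n) =
      PowerSeries.mk fun n => ((n.factorial : ℚ)⁻¹) • B n) :
    B 0 = 1 ∧
    ∀ n : ℕ, 1 ≤ n →
      Polynomial.derivative (B n) = (n : ℚ) • B (n - 1) ∧
      ∑ k ∈ Finset.Icc l m, a k • (B n).comp (Polynomial.X + Polynomial.C (k : ℚ)) =
        (n : ℚ) • (Polynomial.X : Polynomial ℚ) ^ (n - 1) := by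
  classical
  set T : ℕ → ℚ := fun i => ∑ k ∈ Finset.Icc l m, a k * (k : ℚ) ^ i with hTdef
  have hT0 : T 0 = 0 := by simpa [hTdef] using ha0
  have hT1 : T 1 = 1 := by
    rw [hTdef]
    simpa [mul_comm] using ha1
  -- key scalar identity: coefficients of `J * Δ = X`
  have hJD : ∀ r : ℕ, ∑ p ∈ Finset.HasAntidiagonal.antidiagonal r,
      PowerSeries.coeff p.1 J * (T p.2 / (p.2.factorial : ℚ)) =
      if r = 1 then 1 else 0 := by
    intro r
    have h := congrArg (PowerSeries.coeff r) hJ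
    rw [PowerSeries.coeff_mul] at h
    simpa [PowerSeries.coeff_mk, PowerSeries.coeff_X, hTdef] using h
  have hJ0 : PowerSeries.coeff 0 J = 1 := by
    have h := hJD 1
    rw [Finset.Nat.sum_antidiagonal_succ] at h
    simpa [hT0, hT1] using h
  -- explicit formula for `B n`
  have hBc : ∀ n : ℕ, ((n.factorial : ℚ)⁻¹) • B n =
      ∑ p ∈ Finset.HasAntidiagonal.antidiagonal n, Polynomial.C (PowerSeries.coeff p.1 J) *
        (((p.2.factorial : ℚ)⁻¹) • Polynomial.X ^ p.2) := by
    intro n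
    have h := congrArg (PowerSeries.coeff n) hB
    rw [PowerSeries.coeff_mul] at h
    simpa [PowerSeries.coeff_mk, PowerSeries.coeff_map] using h.symm
  have hBf : ∀ n : ℕ, B n = ∑ p ∈ Finset.HasAntidiagonal.antidiagonal n,
      ((n.factorial : ℚ) / (p.2.factorial : ℚ) * PowerSeries.coeff p.1 J) •
        Polynomial.X ^ p.2 := by
    intro n
    have hn : (n.factorial : ℚ) ≠ 0 := Nat.cast_ne_zero.mpr n.factorial_ne_zero
    calc B n = (n.factorial : ℚ) • (((n.factorial : ℚ)⁻¹) • B n) := by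
          rw [smul_smul, mul_inv_cancel₀ hn, one_smul]
      _ = _ := by
          rw [hBc n, Finset.smul_sum]
          refine Finset.sum_congr rfl fun p hp => ?_
          have hp2 : ((p.2.factorial : ℚ)) ≠ 0 := Nat.cast_ne_zero.mpr p.2.factorial_ne_zero
          rw [mul_smul_comm, ← Polynomial.smul_eq_C_mul, smul_smul, smul_smul]
          congr 1
          try field_simp
          try ring
  have hB0 : B 0 = 1 := by
    have h := hBf 0
    simpa [hJ0] using h
  -- derivative identity
  have hder : ∀ n : ℕ, Polynomial.derivative (B (n + 1)) = ((n + 1 : ℕ) : ℚ) • B n := by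
    intro n
    rw [hBf (n + 1), hBf n, map_sum, Finset.Nat.sum_antidiagonal_succ', Finset.smul_sum]
    rw [Polynomial.derivative_smul]
    simp only [pow_zero, Polynomial.derivative_one, smul_zero, zero_add]
    refine Finset.sum_congr rfl fun p hp => ?_
    rw [Polynomial.derivative_smul, Polynomial.derivative_X_pow, Nat.add_sub_cancel,
      ← Polynomial.smul_eq_C_mul, smul_smul, smul_smul]
    congr 1
    have h1 : ((p.2.factorial : ℚ)) ≠ 0 := Nat.cast_ne_zero.mpr p.2.factorial_ne_zero
    have h2 : (((p.2 + 1).factorial : ℚ)) ≠ 0 := Nat.cast_ne_zero.mpr (p.2 + 1).factorial_ne_zero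
    simp only [Nat.factorial_succ] at h2 ⊢
    push_cast at h2 ⊢
    field_simp
  -- the delta-operator identity
  have hsum : ∀ n : ℕ, 1 ≤ n →
      ∑ k ∈ Finset.Icc l m, a k • (B n).comp (Polynomial.X + Polynomial.C (k : ℚ)) =
        (n : ℚ) • (Polynomial.X : Polynomial ℚ) ^ (n - 1) := by
    intro n hn
    ext s
    rw [Polynomial.finset_sum_coeff]
    have hterm : ∀ k : ℤ, (a k • (B n).comp (Polynomial.X + Polynomial.C (k : ℚ))).coeff s =
        ∑ p ∈ Finset.HasAntidiagonal.antidiagonal n, a k *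
          (((n.factorial : ℚ) / (p.2.factorial : ℚ) * PowerSeries.coeff p.1 J) *
            ((k : ℚ) ^ (p.2 - s) * (p.2.choose s : ℚ))) := by
      intro k
      rw [Polynomial.coeff_smul, hBf n, Polynomial.sum_comp, Polynomial.finset_sum_coeff,
        Finset.smul_sum]
      refine Finset.sum_congr rfl fun p hp => ?_
      rw [Polynomial.smul_comp, Polynomial.pow_comp, Polynomial.X_comp, Polynomial.coeff_smul,
        Polynomial.coeff_X_add_C_pow]
      simp only [smul_eq_mul]
      try ring
    simp only [hterm]
    rw [Finset.sum_comm]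
    have hinner : ∀ p : ℕ × ℕ, ∑ k ∈ Finset.Icc l m,
        a k * (((n.factorial : ℚ) / (p.2.factorial : ℚ) * PowerSeries.coeff p.1 J) *
          ((k : ℚ) ^ (p.2 - s) * (p.2.choose s : ℚ))) =
        ((n.factorial : ℚ) / (p.2.factorial : ℚ) * PowerSeries.coeff p.1 J) *
          (p.2.choose s : ℚ) * T (p.2 - s) := by
      intro p
      rw [hTdef, Finset.mul_sum]
      exact Finset.sum_congr rfl fun k _ => by ring
    simp only [hinner]
    rw [Finset.Nat.sum_antidiagonal_eq_sum_range_succ_mk]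
    have hRHS : ((n : ℚ) • (Polynomial.X : Polynomial ℚ) ^ (n - 1)).coeff s =
        if s = n - 1 then (n : ℚ) else 0 := by
      rw [Polynomial.coeff_smul, Polynomial.coeff_X_pow, smul_eq_mul, mul_ite, mul_one, mul_zero]
    rw [hRHS]
    by_cases hs : s < n
    · -- restrict the sum to `range (n - s + 1)`
      rw [← Finset.sum_subset (Finset.range_subset_range.mpr (by omega : n - s + 1 ≤ n + 1))
        (fun i hi hni => by
          have h1 : n - i < s := by
            simp only [Finset.mem_range] at hi hni; omega
          rw [Nat.choose_eq_zero_of_lt h1]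
          push_cast
          ring)]
      have hstep : ∀ i ∈ Finset.range (n - s + 1),
          ((n.factorial : ℚ) / ((n - i).factorial : ℚ) * PowerSeries.coeff i J) *
            ((n - i).choose s : ℚ) * T (n - i - s) =
          ((n.factorial : ℚ) / (s.factorial : ℚ)) *
            (PowerSeries.coeff i J * (T (n - s - i) / (((n - s - i).factorial : ℚ)))) := by
        intro i hi
        have his : s ≤ n - i := by
          simp only [Finset.mem_range] at hi; omega
        have heq : n - i - s = n - s - i := by omega
        rw [Nat.cast_choose ℚ his, heq]
        have h1 : ((n - i).factorial : ℚ) ≠ 0 := Nat.cast_ne_zero.mpr (n - i).factorial_ne_zero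
        have h2 : ((s.factorial : ℚ)) ≠ 0 := Nat.cast_ne_zero.mpr s.factorial_ne_zero
        have h3 : (((n - s - i).factorial : ℚ)) ≠ 0 :=
          Nat.cast_ne_zero.mpr (n - s - i).factorial_ne_zero
        field_simp
      rw [Finset.sum_congr rfl hstep, ← Finset.mul_sum]
      have hkey : ∑ i ∈ Finset.range (n - s + 1),
          PowerSeries.coeff i J * (T (n - s - i) / (((n - s - i).factorial : ℚ))) =
          if n - s = 1 then 1 else 0 := by
        have h := hJD (n - s)
        rwa [Finset.Nat.sum_antidiagonal_eq_sum_range_succ_mk] at h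
      rw [hkey]
      by_cases hs1 : s = n - 1
      · have hns : n - s = 1 := by omega
        rw [if_pos hns, if_pos hs1, mul_one]
        obtain ⟨n', rfl⟩ : ∃ n', n = n' + 1 := ⟨n - 1, by omega⟩
        have hs' : s = n' := by omega
        subst hs'
        rw [Nat.factorial_succ]
        have h2 : ((s.factorial : ℚ)) ≠ 0 := Nat.cast_ne_zero.mpr s.factorial_ne_zero
        push_cast
        field_simp
      · have hns : n - s ≠ 1 := by omega
        rw [if_neg hns, if_neg hs1, mul_zero]
    · -- `s ≥ n`: everything vanishes
      rw [if_neg (by omega)]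
      refine Finset.sum_eq_zero fun i hi => ?_
      rcases Nat.lt_or_ge (n - i) s with h | h
      · rw [Nat.choose_eq_zero_of_lt h]
        push_cast
        ring
      · have h1 : n - i = s := by omega
        have h2 : n - i - s = 0 := by omega
        rw [h2, hT0, mul_zero]
  refine ⟨hB0, fun n hn => ?_⟩
  obtain ⟨n', rfl⟩ : ∃ n', n = n' + 1 := ⟨n - 1, by omega⟩
  exact ⟨by simpa using hder n', hsum (n' + 1) hn⟩
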